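/- Fix b > 0 and a nonnegative sequence (σ_t)_{t≥2} with σ_t → 0 as t → ∞. Define recursively V_1 = b² and, for t ≥ 2: γ_t* = 0 if V_{t−1} ≤ σ_t(b−σ_t); γ_t* = 1 if σ_t ≥ b; γ_t* = (V_{t−1} − σ_t(b−σ_t)) / (V_{t−1} + (b−σ_t)²) otherwise; and V_t = (γ_t*·b + (1−γ_t*)·σ_t)² + (1−γ_t*)²·V_{t−1}. Then γ_t* → 0 and V_t → 0 as t → ∞. -/

import Mathlib

open Filter

set_option maxHeartbeats 1000000 in
/-- Consistency of the OEUVRE variance recursion with the optimal weights: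
if the stability bounds satisfy `σ_t → 0`, then the optimal weights `γ_t* → 0`
and the variance bounds `V_t → 0`. -/
theorem oeuvre_consistency (b : ℝ) (hb : 0 < b)
    (σ : ℕ → ℝ) (hσnn : ∀ t ≥ 2, 0 ≤ σ t)
    (hσ0 : Tendsto σ atTop (nhds 0))
    (V γstar : ℕ → ℝ)
    (hV1 : V 1 = b ^ 2)
    (hγ : ∀ t ≥ 2, γstar t =
      if V (t - 1) ≤ σ t * (b - σ t) then 0
      else if b ≤ σ t then 1
      else (V (t - 1) - σ t * (b - σ t)) / (V (t - 1) + (b - σ t) ^ 2))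
    (hVrec : ∀ t ≥ 2,
      V t = (γstar t * b + (1 - γstar t) * σ t) ^ 2 + (1 - γstar t) ^ 2 * V (t - 1)) :
    Tendsto γstar atTop (nhds 0) ∧ Tendsto V atTop (nhds 0) := by
  -- nonnegativity of V
  have hVnn : ∀ t, 1 ≤ t → 0 ≤ V t := by
    intro t ht
    induction t with
    | zero => omega
    | succ n ih =>
      rcases Nat.lt_or_ge n 1 with h1 | h1
      · interval_cases n
        rw [hV1]; positivity
      · have h2 : n + 1 ≥ 2 := by omega
        have hrec := hVrec (n + 1) h2
        simp only [Nat.add_sub_cancel] at hrec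
        have hprev := ih h1
        rw [hrec]
        positivity
  -- key minimality: V t is at most the value of the quadratic at any x ∈ [0,1]
  have key : ∀ t, 2 ≤ t → ∀ x : ℝ, 0 ≤ x → x ≤ 1 →
      V t ≤ (x * b + (1 - x) * σ t) ^ 2 + (1 - x) ^ 2 * V (t - 1) := by
    intro t ht x hx0 hx1
    have hVp : 0 ≤ V (t - 1) := hVnn _ (by omega)
    have hσp : 0 ≤ σ t := hσnn t ht
    rw [hVrec t ht, hγ t ht]
    set s := σ t with hs
    set W := V (t - 1) with hW
    split_ifs with h1 h2
    · -- γ* = 0, with W ≤ s (b - s)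
      nlinarith [sq_nonneg (x * (b - s)), mul_nonneg (sq_nonneg x) hVp,
        mul_nonneg hx0 (sub_nonneg.mpr h1)]
    · -- γ* = 1, with b ≤ s
      nlinarith [sq_nonneg (1 - x), mul_nonneg (sq_nonneg (1 - x)) hVp,
        mul_nonneg (mul_nonneg (sub_nonneg.mpr hx1) (sub_nonneg.mpr h2)) hx0,
        mul_nonneg (mul_nonneg (sub_nonneg.mpr hx1) (sub_nonneg.mpr h2)) hb.le,
        mul_nonneg hx0 hb.le]
    · -- interior optimum
      have hsb : s < b := lt_of_not_ge h2
      have hA : (0:ℝ) < W + (b - s) ^ 2 := by nlinarith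
      set A := W + (b - s) ^ 2 with hAdef
      set B := W - s * (b - s) with hBdef
      have hANe : A ≠ 0 := ne_of_gt hA
      have h5 : (x * b + (1 - x) * s) ^ 2 + (1 - x) ^ 2 * W -
          (((B / A) * b + (1 - B / A) * s) ^ 2 + (1 - B / A) ^ 2 * W)
          = (A * x - B) ^ 2 / A := by
        field_simp
        ring
      have h6 : 0 ≤ (A * x - B) ^ 2 / A := div_nonneg (sq_nonneg _) hA.le
      linarith [h5 ▸ h6]
  -- upper bound V t ≤ b^2
  have hVub : ∀ t, 1 ≤ t → V t ≤ b ^ 2 := by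
    intro t ht
    rcases Nat.lt_or_ge t 2 with h | h
    · interval_cases t
      exact le_of_eq hV1
    · have := key t h 1 zero_le_one le_rfl
      simpa using this
  -- main convergence of V
  have hVto : Tendsto V atTop (nhds 0) := by
    rw [NormedAddCommGroup.tendsto_nhds_zero]
    intro ε hε
    set g : ℝ := min 1 (ε / (8 * b ^ 2)) with hgdef
    have hg0 : 0 < g := lt_min one_pos (by positivity)
    have hg1 : g ≤ 1 := min_le_left _ _
    have hgε : g ≤ ε / (8 * b ^ 2) := min_le_right _ _
    -- eventually σ t < g * b
    have hδ : 0 < g * b := mul_pos hg0 hb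
    have hσev : ∀ᶠ t in atTop, ‖σ t‖ < g * b := by
      have := NormedAddCommGroup.tendsto_nhds_zero.mp hσ0 (g * b) hδ
      simpa using this
    rw [eventually_atTop] at hσev
    obtain ⟨T0, hT0⟩ := hσev
    set T := max T0 2 with hTdef
    have hT2 : 2 ≤ T := le_max_right _ _
    -- one-step inequality for t ≥ T
    have step : ∀ t, T ≤ t → V t ≤ g * (ε / 2) + (1 - g) ^ 2 * V (t - 1) := by
      intro t htT
      have ht2 : 2 ≤ t := le_trans hT2 htT
      have hσt : σ t < g * b := by
        have := hT0 t (le_trans (le_max_left _ _) htT)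
        rw [Real.norm_eq_abs, abs_lt] at this
        exact this.2
      have hσtp : 0 ≤ σ t := hσnn t ht2
      have hVp : 0 ≤ V (t - 1) := hVnn _ (by omega)
      have h1 := key t ht2 g hg0.le hg1
      have h2 : (g * b + (1 - g) * σ t) ^ 2 ≤ (2 * g * b) ^ 2 := by
        have hle : g * b + (1 - g) * σ t ≤ 2 * g * b := by
          nlinarith [mul_nonneg hg0.le hσtp]
        have hge : 0 ≤ g * b + (1 - g) * σ t := by
          nlinarith [mul_nonneg (sub_nonneg.mpr hg1) hσtp]
        nlinarith
      have h3 : (2 * g * b) ^ 2 ≤ g * (ε / 2) := by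
        have hgb : g * (8 * b ^ 2) ≤ ε := (le_div_iff₀ (by positivity)).mp hgε
        nlinarith [sq_nonneg g, hg0.le]
      linarith
    -- iterate the contraction
    set r : ℝ := (1 - g) ^ 2 with hrdef
    have hr0 : 0 ≤ r := sq_nonneg _
    have hr1 : r < 1 := by
      have : |1 - g| < 1 := by rw [abs_lt]; constructor <;> nlinarith
      calc r = |1 - g| ^ 2 := by rw [sq_abs]
        _ < 1 := by nlinarith [abs_nonneg (1 - g)]
    have claim : ∀ n : ℕ, V (T + n) ≤ ε / 2 + r ^ n * b ^ 2 := by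
      intro n
      induction n with
      | zero =>
        simpa using le_trans (hVub T (by omega)) (by linarith [half_pos hε])
      | succ n ih =>
        have hstep := step (T + (n + 1)) (by omega)
        have heq : T + (n + 1) - 1 = T + n := by omega
        rw [heq] at hstep
        have hVp : 0 ≤ V (T + n) := hVnn _ (by omega)
        have hrn : 0 ≤ r ^ n := pow_nonneg hr0 n
        have hgr : g + r ≤ 1 := by rw [hrdef]; nlinarith
        calc V (T + (n + 1)) ≤ g * (ε / 2) + r * V (T + n) := hstep
          _ ≤ g * (ε / 2) + r * (ε / 2 + r ^ n * b ^ 2) :=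
              add_le_add_right (mul_le_mul_of_nonneg_left ih hr0) _
          _ = (g + r) * (ε / 2) + r ^ (n + 1) * b ^ 2 := by ring
          _ ≤ ε / 2 + r ^ (n + 1) * b ^ 2 := by
              have h2ε : 0 < ε / 2 := half_pos hε
              nlinarith
    -- conclude
    have hpow : Tendsto (fun n : ℕ => r ^ n) atTop (nhds 0) :=
      tendsto_pow_atTop_nhds_zero_of_lt_one hr0 hr1
    have : ∀ᶠ n : ℕ in atTop, r ^ n * b ^ 2 < ε / 2 := by
      have h2 : Tendsto (fun n : ℕ => r ^ n * b ^ 2) atTop (nhds 0) := by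
        simpa [mul_comm] using hpow.mul_const (b ^ 2)
      have := NormedAddCommGroup.tendsto_nhds_zero.mp h2 (ε / 2) (half_pos hε)
      filter_upwards [this] with n hn
      calc r ^ n * b ^ 2 ≤ ‖r ^ n * b ^ 2‖ := le_abs_self _
        _ < ε / 2 := hn
    rw [eventually_atTop] at this
    obtain ⟨N, hN⟩ := this
    rw [eventually_atTop]
    refine ⟨T + N, fun t ht => ?_⟩
    have hVt : 0 ≤ V t := hVnn t (by omega)
    rw [Real.norm_eq_abs, abs_of_nonneg hVt]
    have htT : T ≤ t := by omega
    have hdecomp : t = T + (t - T) := by omega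
    have h1 : V t ≤ ε / 2 + r ^ (t - T) * b ^ 2 := by
      have := claim (t - T)
      rwa [← hdecomp] at this
    have h2 : r ^ (t - T) ≤ r ^ N :=
      pow_le_pow_of_le_one hr0 hr1.le (by omega)
    have h3 : r ^ (t - T) * b ^ 2 ≤ r ^ N * b ^ 2 :=
      mul_le_mul_of_nonneg_right h2 (by positivity)
    have h4 := hN N le_rfl
    linarith
  -- convergence of γstar
  refine ⟨?_, hVto⟩
  -- eventually σ t < b / 2
  have hσev : ∀ᶠ t in atTop, σ t < b / 2 := by
    have := NormedAddCommGroup.tendsto_nhds_zero.mp hσ0 (b / 2) (by positivity)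
    filter_upwards [this] with t ht
    calc σ t ≤ ‖σ t‖ := le_abs_self _
      _ < b / 2 := ht
  have hbound : ∀ᶠ t in atTop, 0 ≤ γstar t ∧ γstar t ≤ V (t - 1) / (b / 2) ^ 2 := by
    filter_upwards [hσev, eventually_ge_atTop 2] with t hσt ht2
    have hVp : 0 ≤ V (t - 1) := hVnn _ (by omega)
    have hσtp : 0 ≤ σ t := hσnn t ht2
    rw [hγ t ht2]
    split_ifs with h1 h2
    · exact ⟨le_rfl, by positivity⟩
    · exfalso; linarith
    · have hsb : b / 2 < b - σ t := by linarith
      have hA : (0:ℝ) < V (t - 1) + (b - σ t) ^ 2 := by nlinarith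
      constructor
      · apply div_nonneg _ hA.le
        linarith [lt_of_not_ge h1]
      · apply div_le_div₀ hVp _ (by positivity) _
        · nlinarith [mul_nonneg hσtp (by linarith : (0:ℝ) ≤ b - σ t)]
        · nlinarith
  -- squeeze
  have hVshift : Tendsto (fun t : ℕ => V (t - 1) / (b / 2) ^ 2) atTop (nhds 0) := by
    have h1 : Tendsto (fun t : ℕ => V (t - 1)) atTop (nhds 0) :=
      hVto.comp (tendsto_sub_atTop_nat 1)
    simpa using h1.div_const ((b / 2) ^ 2)
  have h0 : Tendsto (fun _ : ℕ => (0:ℝ)) atTop (nhds 0) := tendsto_const_nhds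
  exact tendsto_of_tendsto_of_tendsto_of_le_of_le' h0 hVshift
    (hbound.mono fun t h => h.1) (hbound.mono fun t h => h.2)
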